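/- Let F ⊆ ℝ² be a fractal square with base n ≥ 2 and digit set D ⊆ {0,1,…,n−1}², #D ≥ 2 (so F = ⋃_{d∈D}(F+d)/n). Define F₀ = [0,1]² and F_k = (F_{k−1} + D)/n for k ≥ 1, and set H = F + ℤ². If N ≥ 1 and γ ⊆ ℝ² is any set contained in the interior of F_N and disjoint from F, then n^N·γ ⊆ ℝ² \ H. (In the paper this is stated for γ an open arc contained in the interior of F_N \ F.) -/

import Mathlib

open Pointwise

private lemma fs_mem_union {n : ℕ} {D : Finset (ℕ × ℕ)} {F : Set (ℝ × ℝ)}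
    (hF : F = ⋃ d ∈ D, (fun x : ℝ × ℝ => ((n : ℝ))⁻¹ • (x + ((d.1 : ℝ), (d.2 : ℝ)))) '' F)
    {m : ℝ × ℝ} (hm : m ∈ F) :
    ∃ d ∈ D, ∃ x ∈ F, m = ((n : ℝ))⁻¹ • (x + ((d.1 : ℝ), (d.2 : ℝ))) := by
  conv at hm => rw [hF]
  simp only [Set.mem_iUnion, Set.mem_image] at hm
  obtain ⟨d, hd, x, hx, hxe⟩ := hm
  exact ⟨d, hd, x, hx, hxe.symm⟩

private lemma fs_key (n : ℕ) (hn : 2 ≤ n) (D : Finset (ℕ × ℕ))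
    (F : Set (ℝ × ℝ))
    (hF : F = ⋃ d ∈ D, (fun x : ℝ × ℝ => ((n : ℝ))⁻¹ • (x + ((d.1 : ℝ), (d.2 : ℝ)))) '' F)
    (Fk : ℕ → Set (ℝ × ℝ))
    (hF0 : Fk 0 = Set.Icc ((0, 0) : ℝ × ℝ) (1, 1))
    (hFk : ∀ k : ℕ,
      Fk (k + 1) = ⋃ d ∈ D, (fun x : ℝ × ℝ => ((n : ℝ))⁻¹ • (x + ((d.1 : ℝ), (d.2 : ℝ)))) '' Fk k) :
    ∀ N : ℕ, ∀ y ∈ Fk N, ∀ z : ℤ × ℤ,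
      0 < (n:ℝ)^N * y.1 - z.1 → (n:ℝ)^N * y.1 - z.1 < 1 →
      0 < (n:ℝ)^N * y.2 - z.2 → (n:ℝ)^N * y.2 - z.2 < 1 →
      ∀ f ∈ F, ((n:ℝ)^N)⁻¹ • (f + ((z.1:ℝ), (z.2:ℝ))) ∈ F := by
  have hn0 : (0:ℝ) < n := Nat.cast_pos.mpr (by omega)
  intro N
  induction N with
  | zero =>
    intro y hy z h1 h2 h3 h4 f hf
    rw [hF0] at hy
    obtain ⟨hlo, hhi⟩ := hy
    simp only [Prod.le_def] at hlo hhi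
    simp only [pow_zero, one_mul] at h1 h2 h3 h4
    have hz1 : z.1 = 0 := by
      have a1 : (z.1:ℝ) < 1 := by linarith [hlo.1]
      have a2 : (-1:ℝ) < z.1 := by linarith [hhi.1]
      have b1 : z.1 < 1 := by exact_mod_cast a1
      have b2 : (-1:ℤ) < z.1 := by exact_mod_cast a2
      omega
    have hz2 : z.2 = 0 := by
      have a1 : (z.2:ℝ) < 1 := by linarith [hlo.2]
      have a2 : (-1:ℝ) < z.2 := by linarith [hhi.2]
      have b1 : z.2 < 1 := by exact_mod_cast a1
      have b2 : (-1:ℤ) < z.2 := by exact_mod_cast a2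
      omega
    simpa [hz1, hz2, Prod.mk_zero_zero] using hf
  | succ N ih =>
    intro y hy z h1 h2 h3 h4 f hf
    rw [hFk N] at hy
    simp only [Set.mem_iUnion, Set.mem_image] at hy
    obtain ⟨d, hd, y', hy', hye⟩ := hy
    have hne : (n:ℝ) ≠ 0 := ne_of_gt hn0
    have hy1 : y.1 = (n:ℝ)⁻¹ * (y'.1 + d.1) := by rw [← hye]; simp; ring
    have hy2 : y.2 = (n:ℝ)⁻¹ * (y'.2 + d.2) := by rw [← hye]; simp; ring
    set z' : ℤ × ℤ := (z.1 - d.1 * n^N, z.2 - d.2 * n^N) with hz'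
    have e1 : (n:ℝ)^N * y'.1 - z'.1 = (n:ℝ)^(N+1) * y.1 - z.1 := by
      simp only [hz']
      push_cast
      rw [hy1]
      field_simp
      ring
    have e2 : (n:ℝ)^N * y'.2 - z'.2 = (n:ℝ)^(N+1) * y.2 - z.2 := by
      simp only [hz']
      push_cast
      rw [hy2]
      field_simp
      ring
    have hg := ih y' hy' z' (by rw [e1]; exact h1) (by rw [e1]; exact h2)
      (by rw [e2]; exact h3) (by rw [e2]; exact h4) f hf
    rw [hF]
    simp only [Set.mem_iUnion, Set.mem_image]
    refine ⟨d, hd, _, hg, ?_⟩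
    have hpne : ((n:ℝ)^N) ≠ 0 := pow_ne_zero _ hne
    apply Prod.ext
    · simp only [hz']
      push_cast
      simp only [Prod.smul_fst, Prod.fst_add, smul_eq_mul]
      field_simp
      ring
    · simp only [hz']
      push_cast
      simp only [Prod.smul_snd, Prod.snd_add, smul_eq_mul]
      field_simp
      ring

private lemma fs_bounds (n : ℕ) (hn : 2 ≤ n) (D : Finset (ℕ × ℕ))
    (hD : ∀ d ∈ D, d.1 < n ∧ d.2 < n)
    (F : Set (ℝ × ℝ)) (hFne : F.Nonempty) (hFc : IsCompact F)
    (hF : F = ⋃ d ∈ D, (fun x : ℝ × ℝ => ((n : ℝ))⁻¹ • (x + ((d.1 : ℝ), (d.2 : ℝ)))) '' F) :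
    ∀ f ∈ F, 0 ≤ f.1 ∧ f.1 ≤ 1 ∧ 0 ≤ f.2 ∧ f.2 ≤ 1 := by
  have hn0 : (0:ℝ) < n := Nat.cast_pos.mpr (by omega)
  have hne : (n:ℝ) ≠ 0 := ne_of_gt hn0
  have hmax1 : ∀ f ∈ F, f.1 ≤ 1 := by
    obtain ⟨m, hmF, hmax⟩ := hFc.exists_isMaxOn hFne continuous_fst.continuousOn
    obtain ⟨d, hd, x, hx, he⟩ := fs_mem_union hF hmF
    have hm1 : (n:ℝ) * m.1 = x.1 + d.1 := by rw [he]; simp; field_simp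
    have hdn : (d.1:ℝ) ≤ (n:ℝ) - 1 := by
      have := (hD d hd).1; have : (d.1:ℝ) < n := by exact_mod_cast this
      have hi : (d.1:ℝ) + 1 ≤ n := by
        have := (hD d hd).1; exact_mod_cast this
      linarith
    have hxm : x.1 ≤ m.1 := hmax hx
    have hn2 : (2:ℝ) ≤ n := by exact_mod_cast hn
    have hle : m.1 ≤ 1 := by nlinarith
    intro f hf; exact le_trans (hmax hf) hle
  have hmin1 : ∀ f ∈ F, 0 ≤ f.1 := by
    obtain ⟨m, hmF, hmin⟩ := hFc.exists_isMinOn hFne continuous_fst.continuousOn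
    obtain ⟨d, hd, x, hx, he⟩ := fs_mem_union hF hmF
    have hm1 : (n:ℝ) * m.1 = x.1 + d.1 := by rw [he]; simp; field_simp
    have hd0 : (0:ℝ) ≤ (d.1:ℝ) := by positivity
    have hxm : m.1 ≤ x.1 := hmin hx
    have hn2 : (2:ℝ) ≤ n := by exact_mod_cast hn
    have hle : 0 ≤ m.1 := by nlinarith
    intro f hf; exact le_trans hle (hmin hf)
  have hmax2 : ∀ f ∈ F, f.2 ≤ 1 := by
    obtain ⟨m, hmF, hmax⟩ := hFc.exists_isMaxOn hFne continuous_snd.continuousOn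
    obtain ⟨d, hd, x, hx, he⟩ := fs_mem_union hF hmF
    have hm1 : (n:ℝ) * m.2 = x.2 + d.2 := by rw [he]; simp; field_simp
    have hdn : (d.2:ℝ) ≤ (n:ℝ) - 1 := by
      have hi : (d.2:ℝ) + 1 ≤ n := by
        have := (hD d hd).2; exact_mod_cast this
      linarith
    have hxm : x.2 ≤ m.2 := hmax hx
    have hn2 : (2:ℝ) ≤ n := by exact_mod_cast hn
    have hle : m.2 ≤ 1 := by nlinarith
    intro f hf; exact le_trans (hmax hf) hle
  have hmin2 : ∀ f ∈ F, 0 ≤ f.2 := by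
    obtain ⟨m, hmF, hmin⟩ := hFc.exists_isMinOn hFne continuous_snd.continuousOn
    obtain ⟨d, hd, x, hx, he⟩ := fs_mem_union hF hmF
    have hm1 : (n:ℝ) * m.2 = x.2 + d.2 := by rw [he]; simp; field_simp
    have hd0 : (0:ℝ) ≤ (d.2:ℝ) := by positivity
    have hxm : m.2 ≤ x.2 := hmin hx
    have hn2 : (2:ℝ) ≤ n := by exact_mod_cast hn
    have hle : 0 ≤ m.2 := by nlinarith
    intro f hf; exact le_trans hle (hmin hf)
  exact fun f hf => ⟨hmin1 f hf, hmax1 f hf, hmin2 f hf, hmax2 f hf⟩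

theorem fractalSquare_scaled_arc_in_complement
    (n : ℕ) (hn : 2 ≤ n) (D : Finset (ℕ × ℕ))
    (hD : ∀ d ∈ D, d.1 < n ∧ d.2 < n) (hcard : 2 ≤ D.card)
    (F : Set (ℝ × ℝ)) (hFne : F.Nonempty) (hFc : IsCompact F)
    (hF : F = ⋃ d ∈ D, (fun x : ℝ × ℝ => ((n : ℝ))⁻¹ • (x + ((d.1 : ℝ), (d.2 : ℝ)))) '' F)
    (Fk : ℕ → Set (ℝ × ℝ))
    (hF0 : Fk 0 = Set.Icc ((0, 0) : ℝ × ℝ) (1, 1))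
    (hFk : ∀ k : ℕ,
      Fk (k + 1) = ⋃ d ∈ D, (fun x : ℝ × ℝ => ((n : ℝ))⁻¹ • (x + ((d.1 : ℝ), (d.2 : ℝ)))) '' Fk k)
    (H : Set (ℝ × ℝ))
    (hH : H = {p : ℝ × ℝ | ∃ x ∈ F, ∃ z : ℤ × ℤ, p = x + ((z.1 : ℝ), (z.2 : ℝ))})
    (N : ℕ) (hN : 1 ≤ N)
    (γ : Set (ℝ × ℝ)) (hγ₁ : γ ⊆ interior (Fk N)) (hγ₂ : γ ∩ F = ∅) :
    ((n : ℝ) ^ N) • γ ⊆ Hᶜ := by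
  have hn0 : (0:ℝ) < n := Nat.cast_pos.mpr (by omega)
  have hpn : (0:ℝ) < (n:ℝ)^N := pow_pos hn0 N
  have hpne : ((n:ℝ)^N) ≠ 0 := ne_of_gt hpn
  intro p hp
  rw [Set.mem_smul_set] at hp
  obtain ⟨x, hxγ, rfl⟩ := hp
  simp only [Set.mem_compl_iff]
  intro hpH
  rw [hH] at hpH
  obtain ⟨f, hfF, z, hxe⟩ := hpH
  have hx1 : (n:ℝ)^N * x.1 = f.1 + (z.1:ℝ) := by
    have h := congrArg Prod.fst hxe; simpa using h
  have hx2 : (n:ℝ)^N * x.2 = f.2 + (z.2:ℝ) := by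
    have h := congrArg Prod.snd hxe; simpa using h
  obtain ⟨hf1, hf2, hf3, hf4⟩ := fs_bounds n hn D hD F hFne hFc hF f hfF
  have hxi := hγ₁ hxγ
  rw [mem_interior_iff_mem_nhds, Metric.mem_nhds_iff] at hxi
  obtain ⟨ε, hε, hball⟩ := hxi
  set t : ℝ := min 1 (ε * (n:ℝ)^N) with ht
  have ht0 : 0 < t := lt_min one_pos (by positivity)
  have ht1 : t ≤ 1 := min_le_left _ _
  have htε : t / (n:ℝ)^N ≤ ε := by
    rw [div_le_iff₀ hpn]
    exact min_le_right _ _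
  have hqpos : (0:ℝ) < t / (n:ℝ)^N := by positivity
  set x' : ℝ × ℝ := x + (t / (n:ℝ)^N) • ((1/4 - f.1/2, 1/4 - f.2/2) : ℝ × ℝ) with hx'
  have hx'1 : x'.1 = x.1 + (t / (n:ℝ)^N) * (1/4 - f.1/2) := by simp [hx']
  have hx'2 : x'.2 = x.2 + (t / (n:ℝ)^N) * (1/4 - f.2/2) := by simp [hx']
  have key1 : ∀ (a b : ℝ), 0 ≤ b → b ≤ 1 →
      dist (a + (t/(n:ℝ)^N) * (1/4 - b/2)) a < ε := by
    intro a b hb0 hb1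
    rw [Real.dist_eq]
    have h1 : |(1:ℝ)/4 - b/2| ≤ 1/4 := abs_le.mpr ⟨by linarith, by linarith⟩
    have h2 : a + t/(n:ℝ)^N*(1/4-b/2) - a = t/(n:ℝ)^N * (1/4 - b/2) := by ring
    rw [h2, abs_mul, abs_of_pos hqpos]
    linarith [mul_le_mul_of_nonneg_left h1 (le_of_lt hqpos), hε, htε]
  have hx'ball : x' ∈ Metric.ball x ε := by
    rw [Metric.mem_ball, Prod.dist_eq, max_lt_iff]
    constructor
    · rw [hx'1]; exact key1 x.1 f.1 hf1 hf2
    · rw [hx'2]; exact key1 x.2 f.2 hf3 hf4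
  have expand1 : (n:ℝ)^N * x'.1 = (n:ℝ)^N * x.1 + t * (1/4 - f.1/2) := by
    rw [hx'1]; field_simp
  have expand2 : (n:ℝ)^N * x'.2 = (n:ℝ)^N * x.2 + t * (1/4 - f.2/2) := by
    rw [hx'2]; field_simp
  have c1 : (n:ℝ)^N * x'.1 - (z.1:ℝ) = f.1*(1 - t/2) + t/4 := by
    rw [expand1, hx1]; ring
  have c2 : (n:ℝ)^N * x'.2 - (z.2:ℝ) = f.2*(1 - t/2) + t/4 := by
    rw [expand2, hx2]; ring
  have h1' : 0 < (n:ℝ)^N * x'.1 - (z.1:ℝ) := by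
    rw [c1]; linarith [mul_nonneg hf1 (by linarith : (0:ℝ) ≤ 1 - t/2)]
  have h2' : (n:ℝ)^N * x'.1 - (z.1:ℝ) < 1 := by
    rw [c1]; linarith [mul_le_mul_of_nonneg_right hf2 (by linarith : (0:ℝ) ≤ 1 - t/2)]
  have h3' : 0 < (n:ℝ)^N * x'.2 - (z.2:ℝ) := by
    rw [c2]; linarith [mul_nonneg hf3 (by linarith : (0:ℝ) ≤ 1 - t/2)]
  have h4' : (n:ℝ)^N * x'.2 - (z.2:ℝ) < 1 := by
    rw [c2]; linarith [mul_le_mul_of_nonneg_right hf4 (by linarith : (0:ℝ) ≤ 1 - t/2)]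
  have hin := fs_key n hn D F hF Fk hF0 hFk N x' (hball hx'ball) z h1' h2' h3' h4' f hfF
  have heq : ((n:ℝ)^N)⁻¹ • (f + ((z.1:ℝ),(z.2:ℝ))) = x := by
    rw [← hxe, smul_smul, inv_mul_cancel₀ hpne, one_smul]
  have hxF : x ∈ γ ∩ F := ⟨hxγ, heq ▸ hin⟩
  rw [hγ₂] at hxF
  exact hxF
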